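/- Let v¹, …, vᴸ ∈ ℝⁿ be orthonormal vectors, let λ¹, …, λᴸ be real numbers, let M = Σ_{l=1}^{L} λˡ vˡ (vˡ)ᵀ, and let P = Σ_{l=1}^{L} vˡ (vˡ)ᵀ. Let H_x = Σ_{k=0}^{K_x} q_k Mᵏ and H_u = Σ_{k=0}^{K_u} r_k Mᵏ with real coefficients q_k, r_k, and set qˡ = Σ_{k=0}^{K_x} q_k (λˡ)ᵏ and rˡ = Σ_{k=0}^{K_u} r_k (λˡ)ᵏ. Let Q be a d_x×d_x real matrix, R a d_u×d_u real matrix, x ∈ ℝ^{d_x×n}, u ∈ ℝ^{d_u×n}. Write xˡ = x vˡ (vˡ)ᵀ with i-th column x^{l,i}, x̆ = x(I − P) with i-th column x̆ⁱ, and analogously uˡ, u^{l,i}, ŭ, ŭⁱ. Then Σ_{i=1}^{n} Σ_{j=1}^{n} [ (H_x)_{ij} (xⁱ)ᵀ Q xʲ + (H_u)_{ij} (uⁱ)ᵀ R uʲ ] = Σ_{i=1}^{n} [ q₀ (x̆ⁱ)ᵀ Q x̆ⁱ + r₀ (ŭⁱ)ᵀ R ŭⁱ + Σ_{l=1}^{L}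 ( qˡ (x^{l,i})ᵀ Q x^{l,i} + rˡ (u^{l,i})ᵀ R u^{l,i} ) ], where xⁱ and uⁱ denote the i-th columns of x and u. -/

import Mathlib

open Matrix

/-- The `i`-th column of a `d × n` matrix. -/
def matCol {d n : ℕ} (y : Matrix (Fin d) (Fin n) ℝ) (i : Fin n) : Fin d → ℝ :=
  fun p => y p i

section Aux
variable {n L : ℕ}

lemma vecMulVec_mul_vecMulVec (a b c d : Fin n → ℝ) :
    vecMulVec a b * vecMulVec c d = (b ⬝ᵥ c) • vecMulVec a d := by
  ext i j
  simp only [mul_apply, vecMulVec_apply, Matrix.smul_apply, smul_eq_mul, dotProduct,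
    Finset.sum_mul]
  apply Finset.sum_congr rfl
  intro p _
  ring

lemma sym_idem_sum (S B : Matrix (Fin n) (Fin n) ℝ) (hS : Sᵀ = S) (hSS : S * S = S) :
    ∑ i : Fin n, ∑ j : Fin n, S i j * B i j = ∑ i : Fin n, (Sᵀ * B * S) i i := by
  have h1 : ∑ i : Fin n, (Sᵀ * B * S) i i = (Sᵀ * B * S).trace := rfl
  rw [h1, hS, Matrix.trace_mul_cycle, hSS]
  rw [Matrix.trace]
  simp only [Matrix.diag, mul_apply]
  rw [Finset.sum_comm]
  apply Finset.sum_congr rfl; intro i _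
  apply Finset.sum_congr rfl; intro j _
  nth_rewrite 1 [← hS]
  simp [transpose_apply, mul_comm]

lemma dot_eq {d : ℕ} (Q : Matrix (Fin d) (Fin d) ℝ) (y : Matrix (Fin d) (Fin n) ℝ)
    (i j : Fin n) :
    matCol y i ⬝ᵥ Q.mulVec (matCol y j) = (yᵀ * Q * y) i j := by
  simp only [dotProduct, mulVec, matCol, mul_apply, transpose_apply,
    Finset.mul_sum, Finset.sum_mul]
  rw [Finset.sum_comm]
  apply Finset.sum_congr rfl; intro p _
  apply Finset.sum_congr rfl; intro s _
  ring

variable (v : Fin L → (Fin n → ℝ))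
  (horth : ∀ k l, v k ⬝ᵥ v l = if k = l then (1 : ℝ) else 0)

include horth in
lemma Pl_mul_Pl (k l : Fin L) :
    vecMulVec (v k) (v k) * vecMulVec (v l) (v l)
      = if k = l then vecMulVec (v k) (v k) else 0 := by
  rw [vecMulVec_mul_vecMulVec, horth]
  split <;> simp_all

variable (lam : Fin L → ℝ) (M P : Matrix (Fin n) (Fin n) ℝ)
  (hM : M = ∑ l : Fin L, lam l • vecMulVec (v l) (v l))
  (hP : P = ∑ l : Fin L, vecMulVec (v l) (v l))

include horth hM in
lemma sum_Pl_mul (a : Fin L → ℝ) :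
    (∑ l : Fin L, a l • vecMulVec (v l) (v l)) * M
      = ∑ l : Fin L, (a l * lam l) • vecMulVec (v l) (v l) := by
  rw [hM, Finset.sum_mul]
  apply Finset.sum_congr rfl
  intro l _
  rw [Finset.mul_sum]
  have : ∀ m : Fin L, (a l • vecMulVec (v l) (v l)) * (lam m • vecMulVec (v m) (v m))
      = (a l * lam m) • (if l = m then vecMulVec (v l) (v l) else 0) := by
    intro m
    rw [smul_mul_assoc, mul_smul_comm, Pl_mul_Pl v horth, smul_smul]
  simp only [this, smul_ite, smul_zero]
  simp [Finset.sum_ite_eq]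

include horth hM in
lemma Mpow (k : ℕ) :
    M ^ (k + 1) = ∑ l : Fin L, lam l ^ (k + 1) • vecMulVec (v l) (v l) := by
  induction k with
  | zero => simpa using hM
  | succ k ih =>
      rw [pow_succ, ih, sum_Pl_mul v horth lam M hM]
      apply Finset.sum_congr rfl
      intro l _
      rw [← pow_succ]

include horth hM hP in
lemma Hdecomp (K : ℕ) (c : ℕ → ℝ) (cl : Fin L → ℝ)
    (hcl : ∀ l, cl l = ∑ k ∈ Finset.range (K + 1), c k * lam l ^ k) :
    ∑ k ∈ Finset.range (K + 1), c k • M ^ k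
      = c 0 • (1 - P) + ∑ l : Fin L, cl l • vecMulVec (v l) (v l) := by
  have h1 : ∑ l : Fin L, cl l • vecMulVec (v l) (v l)
      = c 0 • P + ∑ l : Fin L,
          (∑ k ∈ Finset.range K, c (k + 1) * lam l ^ (k + 1)) • vecMulVec (v l) (v l) := by
    rw [hP, Finset.smul_sum, ← Finset.sum_add_distrib]
    apply Finset.sum_congr rfl
    intro l _
    rw [hcl l, Finset.sum_range_succ']
    simp [add_smul, add_comm]
  rw [h1, Finset.sum_range_succ']
  have h2 : ∑ k ∈ Finset.range K, c (k + 1) • M ^ (k + 1)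
      = ∑ l : Fin L,
          (∑ k ∈ Finset.range K, c (k + 1) * lam l ^ (k + 1)) • vecMulVec (v l) (v l) := by
    calc ∑ k ∈ Finset.range K, c (k + 1) • M ^ (k + 1)
        = ∑ k ∈ Finset.range K, ∑ l : Fin L,
            (c (k + 1) * lam l ^ (k + 1)) • vecMulVec (v l) (v l) := by
          apply Finset.sum_congr rfl
          intro k _
          rw [Mpow v horth lam M hM, Finset.smul_sum]
          simp [smul_smul]
      _ = ∑ l : Fin L, ∑ k ∈ Finset.range K,
            (c (k + 1) * lam l ^ (k + 1)) • vecMulVec (v l) (v l) := Finset.sum_comm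
      _ = _ := by
          apply Finset.sum_congr rfl
          intro l _
          rw [Finset.sum_smul]
  rw [h2, pow_zero, smul_sub]
  abel

include horth hP in
lemma P_props : Pᵀ = P ∧ P * P = P := by
  constructor
  · rw [hP]
    ext i j
    simp [transpose_apply, Matrix.sum_apply, vecMulVec_apply, mul_comm]
  · rw [hP, Finset.sum_mul]
    apply Finset.sum_congr rfl
    intro k _
    rw [Finset.mul_sum]
    simp only [Pl_mul_Pl v horth]
    simp [Finset.sum_ite_eq]

lemma sum_comm3 {L : ℕ} {α : Type*} [AddCommMonoid α] (F : Fin n → Fin n → Fin L → α) :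
    ∑ i : Fin n, ∑ j : Fin n, ∑ l : Fin L, F i j l
      = ∑ l : Fin L, ∑ i : Fin n, ∑ j : Fin n, F i j l := by
  calc ∑ i : Fin n, ∑ j : Fin n, ∑ l : Fin L, F i j l
      = ∑ i : Fin n, ∑ l : Fin L, ∑ j : Fin n, F i j l :=
        Finset.sum_congr rfl (fun i _ => by rw [Finset.sum_comm])
    _ = _ := by rw [Finset.sum_comm]

include horth hP in
lemma part (B : Matrix (Fin n) (Fin n) ℝ) (c0 : ℝ) (cl : Fin L → ℝ) :
    ∑ i : Fin n, ∑ j : Fin n,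
        ((c0 • (1 - P) + ∑ l : Fin L, cl l • vecMulVec (v l) (v l)) i j) * B i j
      = c0 * ∑ i : Fin n, ((1 - P)ᵀ * B * (1 - P) : Matrix (Fin n) (Fin n) ℝ) i i
        + ∑ l : Fin L, cl l *
            ∑ i : Fin n, ((vecMulVec (v l) (v l))ᵀ * B * (vecMulVec (v l) (v l))) i i := by
  obtain ⟨hPt, hPP⟩ := P_props v horth P hP
  have hS0t : (1 - P)ᵀ = 1 - P := by rw [transpose_sub, transpose_one, hPt]
  have hS0 : (1 - P) * (1 - P) = 1 - P := by
    rw [sub_mul, one_mul, mul_sub, mul_one, hPP]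
    abel
  have hPlt : ∀ l : Fin L, (vecMulVec (v l) (v l))ᵀ = vecMulVec (v l) (v l) := by
    intro l
    ext i j
    simp [transpose_apply, vecMulVec_apply, mul_comm]
  have hPlPl : ∀ l : Fin L,
      vecMulVec (v l) (v l) * vecMulVec (v l) (v l) = vecMulVec (v l) (v l) := by
    intro l
    simpa using Pl_mul_Pl v horth l l
  rw [← sym_idem_sum (1 - P) B hS0t hS0]
  have hrl : ∀ l : Fin L,
      ∑ i : Fin n, ((vecMulVec (v l) (v l))ᵀ * B * (vecMulVec (v l) (v l))) i i
        = ∑ i : Fin n, ∑ j : Fin n, (vecMulVec (v l) (v l)) i j * B i j :=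
    fun l => (sym_idem_sum _ B (hPlt l) (hPlPl l)).symm
  simp only [hrl, Matrix.add_apply, Matrix.sum_apply, Matrix.smul_apply, smul_eq_mul, add_mul,
    Finset.sum_mul, Finset.sum_add_distrib, Finset.mul_sum]
  congr 1
  · apply Finset.sum_congr rfl; intro i _
    apply Finset.sum_congr rfl; intro j _
    ring
  · rw [sum_comm3]
    apply Finset.sum_congr rfl; intro l _
    apply Finset.sum_congr rfl; intro i _
    apply Finset.sum_congr rfl; intro j _
    ring

end Aux
/-- **Spectral decomposition of the per-step cost.** With orthonormal `v¹, …, vᴸ`,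
`M = ∑ l, λˡ vˡ (vˡ)ᵀ`, `P = ∑ l, vˡ (vˡ)ᵀ`, cost-weight matrices
`H_x = ∑ q_k Mᵏ`, `H_u = ∑ r_k Mᵏ`, eigenstates `xˡ = x vˡ (vˡ)ᵀ` and auxiliary state
`x̆ = x (I − P)` (and similarly for `u`), the network cost decomposes as
`∑ᵢⱼ [(H_x)ᵢⱼ (xⁱ)ᵀ Q xʲ + (H_u)ᵢⱼ (uⁱ)ᵀ R uʲ]
  = ∑ᵢ [q₀ (x̆ⁱ)ᵀ Q x̆ⁱ + r₀ (ŭⁱ)ᵀ R ŭⁱ + ∑ₗ (qˡ (x^{l,i})ᵀ Q x^{l,i} + rˡ (u^{l,i})ᵀ R u^{l,i})]`. -/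
theorem per_step_cost_decomposition
    {n L dx du : ℕ}
    (v : Fin L → (Fin n → ℝ))
    (horth : ∀ k l, v k ⬝ᵥ v l = if k = l then (1 : ℝ) else 0)
    (lam : Fin L → ℝ)
    (M P : Matrix (Fin n) (Fin n) ℝ)
    (hM : M = ∑ l : Fin L, lam l • vecMulVec (v l) (v l))
    (hP : P = ∑ l : Fin L, vecMulVec (v l) (v l))
    (Kx Ku : ℕ) (q r : ℕ → ℝ)
    (Hx Hu : Matrix (Fin n) (Fin n) ℝ)
    (hHx : Hx = ∑ k ∈ Finset.range (Kx + 1), q k • M ^ k)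
    (hHu : Hu = ∑ k ∈ Finset.range (Ku + 1), r k • M ^ k)
    (ql rl : Fin L → ℝ)
    (hql : ∀ l, ql l = ∑ k ∈ Finset.range (Kx + 1), q k * lam l ^ k)
    (hrl : ∀ l, rl l = ∑ k ∈ Finset.range (Ku + 1), r k * lam l ^ k)
    (Q : Matrix (Fin dx) (Fin dx) ℝ) (R : Matrix (Fin du) (Fin du) ℝ)
    (x : Matrix (Fin dx) (Fin n) ℝ) (u : Matrix (Fin du) (Fin n) ℝ) :
    ∑ i : Fin n, ∑ j : Fin n,
        (Hx i j * (matCol x i ⬝ᵥ Q.mulVec (matCol x j))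
          + Hu i j * (matCol u i ⬝ᵥ R.mulVec (matCol u j)))
      = ∑ i : Fin n,
          (q 0 * (matCol (x * (1 - P)) i ⬝ᵥ Q.mulVec (matCol (x * (1 - P)) i))
            + r 0 * (matCol (u * (1 - P)) i ⬝ᵥ R.mulVec (matCol (u * (1 - P)) i))
            + ∑ l : Fin L,
                (ql l * (matCol (x * vecMulVec (v l) (v l)) i ⬝ᵥ
                          Q.mulVec (matCol (x * vecMulVec (v l) (v l)) i))
                  + rl l * (matCol (u * vecMulVec (v l) (v l)) i ⬝ᵥ
                          R.mulVec (matCol (u * vecMulVec (v l) (v l)) i)))) := by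
  have conj : ∀ {d : ℕ} (Q : Matrix (Fin d) (Fin d) ℝ) (y : Matrix (Fin d) (Fin n) ℝ)
      (S : Matrix (Fin n) (Fin n) ℝ), (y * S)ᵀ * Q * (y * S) = Sᵀ * (yᵀ * Q * y) * S := by
    intro d Q y S
    rw [transpose_mul]
    simp only [Matrix.mul_assoc]
  have hHx' : Hx = q 0 • (1 - P) + ∑ l : Fin L, ql l • vecMulVec (v l) (v l) := by
    rw [hHx]; exact Hdecomp v horth lam M P hM hP Kx q ql hql
  have hHu' : Hu = r 0 • (1 - P) + ∑ l : Fin L, rl l • vecMulVec (v l) (v l) := by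
    rw [hHu]; exact Hdecomp v horth lam M P hM hP Ku r rl hrl
  simp only [dot_eq, conj]
  simp only [Finset.sum_add_distrib]
  rw [hHx', hHu', part v horth P hP (xᵀ * Q * x) (q 0) ql,
    part v horth P hP (uᵀ * R * u) (r 0) rl]
  have swap : ∀ F : Fin n → Fin L → ℝ,
      ∑ i : Fin n, ∑ l : Fin L, F i l = ∑ l : Fin L, ∑ i : Fin n, F i l :=
    fun F => by rw [Finset.sum_comm]
  rw [swap, swap]
  simp only [← Finset.mul_sum]
  ring
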